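/- Let T be a 1.5D terrain given by a continuous function f : ℝ → ℝ, and let p_i, p_j be points on T with y(p_i) < y(p_j). Let q be a point on T with x(q) < x(p_i) lying on the perpendicular bisector of p_i and p_j. Then any point r on T with x(r) < x(q) that is visible from p_i is strictly closer to p_j than to p_i. -/

import Mathlib

/-- Euclidean distance between two points of `ℝ × ℝ`. -/
noncomputable def edist2 (p q : ℝ × ℝ) : ℝ :=
  Real.sqrt ((p.1 - q.1) ^ 2 + (p.2 - q.2) ^ 2)

/-- `p` sees `q` over the terrain given by `f`: every point of the segment
`[p, q]` lies weakly above the graph of `f`. -/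
def sees (f : ℝ → ℝ) (p q : ℝ × ℝ) : Prop :=
  ∀ t : ℝ, t ∈ Set.Icc (0 : ℝ) 1 →
    (1 - t) * p.2 + t * q.2 ≥ f ((1 - t) * p.1 + t * q.1)

/-- Key lemma, left-side case. -/
theorem key_lemma_left (f : ℝ → ℝ) (hf : Continuous f)
    (xi xj xq xr : ℝ)
    (hy : f xi < f xj)
    (hq_left : xq < xi)
    (hq_bis : edist2 (xq, f xq) (xi, f xi) = edist2 (xq, f xq) (xj, f xj))
    (hr_left : xr < xq)
    (hvis : sees f (xi, f xi) (xr, f xr)) :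
    edist2 (xr, f xr) (xj, f xj) < edist2 (xr, f xr) (xi, f xi) := by
  have hden : (0:ℝ) < xi - xr := by linarith
  set t : ℝ := (xi - xq) / (xi - xr) with ht
  have ht0 : 0 < t := div_pos (by linarith) hden
  have ht1 : t < 1 := (div_lt_one hden).mpr (by linarith)
  have hxq : (1 - t) * xi + t * xr = xq := by
    rw [ht]
    field_simp
    ring
  have hys := hvis t ⟨le_of_lt ht0, le_of_lt ht1⟩
  simp only [hxq] at hys
  have hbis : (xq - xi)^2 + (f xq - f xi)^2 = (xq - xj)^2 + (f xq - f xj)^2 := by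
    have h1 := congrArg (fun x => x ^ 2) hq_bis
    simp only [edist2] at h1
    rwa [Real.sq_sqrt (by positivity), Real.sq_sqrt (by positivity)] at h1
  simp only [edist2]
  apply Real.sqrt_lt_sqrt (by positivity)
  have h1 : 0 ≤ ((1 - t) * f xi + t * f xr - f xq) * (f xj - f xi) :=
    mul_nonneg (by linarith) (by linarith)
  nlinarith [h1, hbis, hxq, ht0, ht1, sq_nonneg (xi - xj),
    mul_pos (show (0:ℝ) < 1 - t by linarith)
      (show (0:ℝ) < (f xi - f xj)^2 by nlinarith [mul_pos (sub_pos.2 hy) (sub_pos.2 hy)]),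
    mul_nonneg (le_of_lt (show (0:ℝ) < 1 - t by linarith)) (sq_nonneg (xi - xj))]
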